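/- Let 0 < α < 1, T > 0, and let η be absolutely continuous on [0,T]. Then for every 0 < t ≤ T, the Caputo fractional derivative of order α of the function t ↦ ∫_0^t η(s) (t−s)^{α−1} ds satisfies ∂_t^α ∫_0^t η(s) (t−s)^{α−1} ds = Γ(α) η(t). -/

import Mathlib

open MeasureTheory Set

/-- The Caputo fractional derivative of order `α ∈ (0,1)` of `u` at time `t`:
`∂_t^α u(t) = (1/Γ(1−α)) ∫_0^t u'(s) (t−s)^{−α} ds`. -/
noncomputable def caputoDeriv (α : ℝ) (u : ℝ → ℝ) (t : ℝ) : ℝ :=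
  (Real.Gamma (1 - α))⁻¹ * ∫ s in (0:ℝ)..t, deriv u s * (t - s) ^ (-α)

/-- A function `f` is absolutely continuous on `[a,b]` iff there is an integrable `f'`
on `[a,b]` with `f x = f a + ∫_a^x f'(t) dt` for all `x ∈ [a,b]`. -/
def AbsContOn (f : ℝ → ℝ) (a b : ℝ) : Prop :=
  ∃ f' : ℝ → ℝ, IntegrableOn f' (Icc a b) ∧
    ∀ x ∈ Icc a b, f x = f a + ∫ t in a..x, f' t

namespace CaputoAux

open intervalIntegral Function Metric Filter

/-! ### The value of the Beta integral -/

lemma beta_val {α : ℝ} (hα0 : 0 < α) (hα1 : α < 1) :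
    ∫ x in (0:ℝ)..1, x ^ (α-1) * (1-x) ^ (-α) = Real.Gamma α * Real.Gamma (1-α) := by
  have h := Complex.Gamma_mul_Gamma_eq_betaIntegral (s := (α:ℂ)) (t := ((1-α:ℝ):ℂ))
    (by simpa using hα0) (by simpa using sub_pos.mpr hα1)
  have h2 : ((α:ℂ)) + ((1-α:ℝ):ℂ) = 1 := by push_cast; ring
  rw [h2, Complex.Gamma_one, one_mul] at h
  have h3 : Complex.betaIntegral (α:ℂ) ((1-α:ℝ):ℂ)
      = ((∫ x in (0:ℝ)..1, x ^ (α-1) * (1-x) ^ (-α) : ℝ) : ℂ) := by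
    rw [Complex.betaIntegral, ← intervalIntegral.integral_ofReal]
    apply intervalIntegral.integral_congr
    intro x hx
    rw [uIcc_of_le (by norm_num)] at hx
    show (x:ℂ) ^ ((α:ℂ) - 1) * (1 - (x:ℂ)) ^ (((1-α:ℝ):ℂ) - 1) = _
    rw [show (1 - (x:ℂ)) = ((1-x:ℝ):ℂ) by push_cast; ring,
      show ((1-α:ℝ):ℂ) - 1 = ((-α:ℝ):ℂ) by push_cast; ring,
      show (α:ℂ) - 1 = ((α-1:ℝ):ℂ) by push_cast; ring,
      ← Complex.ofReal_cpow hx.1, ← Complex.ofReal_cpow (by linarith [hx.2] : (0:ℝ) ≤ 1 - x),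
      ← Complex.ofReal_mul]
  rw [h3] at h
  have h4 : (Complex.Gamma (α:ℂ) * Complex.Gamma ((1-α:ℝ):ℂ))
      = ((Real.Gamma α * Real.Gamma (1-α) : ℝ) : ℂ) := by
    rw [Complex.Gamma_ofReal, Complex.Gamma_ofReal, Complex.ofReal_mul]
  rw [h4] at h
  exact_mod_cast h.symm

lemma beta_shift {α r t : ℝ} (hα0 : 0 < α) (hα1 : α < 1) (hrt : r < t) :
    ∫ s in r..t, (s-r) ^ (α-1) * (t-s) ^ (-α) = Real.Gamma α * Real.Gamma (1-α) := by
  have hc : (0:ℝ) < t - r := by linarith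
  have key := integral_comp_mul_add (a := (0:ℝ)) (b := 1)
    (f := fun s => (s-r) ^ (α-1) * (t-s) ^ (-α)) (c := t - r) (ne_of_gt hc) r
  simp only [mul_zero, zero_add, mul_one, sub_add_cancel] at key
  have e : ∀ x, x ∈ uIcc (0:ℝ) 1 →
      ((t-r) * x + r - r) ^ (α-1) * (t - ((t-r) * x + r)) ^ (-α)
        = (t-r)⁻¹ * (x ^ (α-1) * (1-x) ^ (-α)) := by
    intro x hx
    rw [uIcc_of_le (by norm_num)] at hx
    have h1 : (t-r) * x + r - r = (t-r) * x := by ring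
    have h2 : t - ((t-r) * x + r) = (t-r) * (1-x) := by ring
    rw [h1, h2, Real.mul_rpow hc.le hx.1, Real.mul_rpow hc.le (by linarith [hx.2])]
    rw [show (t-r) ^ (α-1) * x ^ (α-1) * ((t-r) ^ (-α) * (1-x) ^ (-α))
        = ((t-r) ^ (α-1) * (t-r) ^ (-α)) * (x ^ (α-1) * (1-x) ^ (-α)) by ring,
      ← Real.rpow_add hc, show α - 1 + -α = -1 by ring, Real.rpow_neg_one]
  rw [intervalIntegral.integral_congr e] at key
  rw [intervalIntegral.integral_const_mul] at key
  have := congrArg (fun z => (t-r) * z) key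
  simp only [smul_eq_mul, ← mul_assoc, mul_inv_cancel₀ (ne_of_gt hc), one_mul] at this
  rw [← this, beta_val hα0 hα1]

/-! ### Integrability of the singular kernels -/

lemma int_fwd {β r t : ℝ} (hβ : -1 < β) :
    IntegrableOn (fun s => (s-r) ^ β) (Ioc r t) := by
  rcases le_or_gt t r with h | h
  · rw [Ioc_eq_empty (by exact not_lt.mpr h)]; simp
  · have := (intervalIntegrable_rpow' (a := 0) (b := t - r) hβ).comp_sub_right r
    simp only [zero_add, sub_add_cancel] at this
    rwa [intervalIntegrable_iff_integrableOn_Ioc_of_le (by linarith)] at this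

lemma int_rev {β r t : ℝ} (hβ : -1 < β) :
    IntegrableOn (fun s => (t-s) ^ β) (Ioc r t) := by
  rcases le_or_gt t r with h | h
  · rw [Ioc_eq_empty (by exact not_lt.mpr h)]; simp
  · have := ((intervalIntegrable_rpow' (a := 0) (b := t - r) hβ).comp_sub_left t).symm
    simp only [sub_zero, sub_sub_cancel] at this
    rwa [intervalIntegrable_iff_integrableOn_Ioc_of_le (by linarith)] at this

lemma kernel_int {α r t : ℝ} (hα0 : 0 < α) (hα1 : α < 1) (hrt : r < t) :
    IntegrableOn (fun s => (s-r) ^ (α-1) * (t-s) ^ (-α)) (Ioc r t) := by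
  have hrm : r < (r+t)/2 := by linarith
  have hmt : (r+t)/2 < t := by linarith
  have h1 : IntegrableOn (fun s => (s-r) ^ (α-1) * (t-s) ^ (-α)) (Ioc r ((r+t)/2)) := by
    have hmul : ∀ s ∈ Ioc r ((r+t)/2), (s-r) ^ (α-1) * (t-s) ^ (-α)
        = (t-s) ^ (-α) * (s-r) ^ (α-1) := fun s _ => mul_comm _ _
    rw [integrableOn_congr_fun hmul measurableSet_Ioc]
    refine Integrable.bdd_mul (c := (t-(r+t)/2) ^ (-α))
      ((int_fwd (by linarith)).mono_set (Ioc_subset_Ioc_right hmt.le))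
      (Measurable.aestronglyMeasurable (by fun_prop)) ?_
    filter_upwards [ae_restrict_mem measurableSet_Ioc] with s hs
    rw [Real.norm_eq_abs, abs_of_nonneg (Real.rpow_nonneg (by linarith [hs.2]) _)]
    exact Real.rpow_le_rpow_of_nonpos (by linarith [hs.2]) (by linarith [hs.2]) (by linarith)
  have h2 : IntegrableOn (fun s => (s-r) ^ (α-1) * (t-s) ^ (-α)) (Ioc ((r+t)/2) t) := by
    refine Integrable.bdd_mul (c := ((r+t)/2-r) ^ (α-1))
      ((int_rev (by linarith)).mono_set (Ioc_subset_Ioc_left hrm.le))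
      (Measurable.aestronglyMeasurable (by fun_prop)) ?_
    filter_upwards [ae_restrict_mem measurableSet_Ioc] with s hs
    rw [Real.norm_eq_abs, abs_of_nonneg (Real.rpow_nonneg (by linarith [hs.1]) _)]
    exact Real.rpow_le_rpow_of_nonpos (by linarith) (by linarith [hs.1]) (by linarith)
  have : Ioc r t = Ioc r ((r+t)/2) ∪ Ioc ((r+t)/2) t := (Ioc_union_Ioc_eq_Ioc hrm.le hmt.le).symm
  rw [this]
  exact h1.union h2

lemma kernel_int_le {α r t : ℝ} (hα0 : 0 < α) (hα1 : α < 1) (hrt : r ≤ t) :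
    IntegrableOn (fun s => (s-r) ^ (α-1) * (t-s) ^ (-α)) (Ioc r t) := by
  rcases lt_or_eq_of_le hrt with h | h
  · exact kernel_int hα0 hα1 h
  · rw [h, Ioc_self]; simp

/-! ### Antiderivative computations -/

lemma int_pow_base {α τ : ℝ} (hα0 : 0 < α) :
    ∫ x in (0:ℝ)..τ, x ^ (α-1) = τ ^ α / α := by
  rw [integral_rpow (Or.inl (by linarith))]
  rw [Real.zero_rpow (by linarith : α - 1 + 1 ≠ 0), sub_add_cancel, sub_zero]

lemma int_pow_right {α r τ : ℝ} (hα0 : 0 < α) (hrτ : r ≤ τ) :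
    ∫ s in Ioc r τ, (τ-s) ^ (α-1) = (τ-r) ^ α / α := by
  rw [← intervalIntegral.integral_of_le hrτ,
    intervalIntegral.integral_comp_sub_left (fun x => x ^ (α-1)) τ, sub_self,
    int_pow_base hα0]

lemma int_pow_left {α r τ : ℝ} (hα0 : 0 < α) (hrτ : r ≤ τ) :
    ∫ s in Ioc r τ, (s-r) ^ (α-1) = (τ-r) ^ α / α := by
  rw [← intervalIntegral.integral_of_le hrτ,
    intervalIntegral.integral_comp_sub_right (fun x => x ^ (α-1)) r, sub_self,
    int_pow_base hα0]

/-! ### Fubini on the triangle -/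

variable {t : ℝ} {H : ℝ → ℝ → ℝ}

lemma inner_eq1 {r : ℝ} (hr : r ∈ Ioc 0 t) :
    ∫ s in Ioc 0 t, (if r < s then H r s else 0) = ∫ s in Ioc r t, H r s := by
  have : (fun s => if r < s then H r s else 0) = (Ioi r).indicator (H r) := by
    funext s; simp [indicator_apply, mem_Ioi]
  rw [this, MeasureTheory.integral_indicator measurableSet_Ioi,
    Measure.restrict_restrict measurableSet_Ioi,
    show Ioi r ∩ Ioc 0 t = Ioc r t by
      ext s; simp only [mem_inter_iff, mem_Ioi, mem_Ioc]
      exact ⟨fun ⟨h1, _, h3⟩ => ⟨h1, h3⟩, fun ⟨h1, h2⟩ => ⟨h1, lt_trans hr.1 h1, h2⟩⟩]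

lemma inner_eq2 {s : ℝ} (hs : s ∈ Ioc 0 t) :
    ∫ r in Ioc 0 t, (if r < s then H r s else 0) = ∫ r in Ioc 0 s, H r s := by
  have : (fun r => if r < s then H r s else 0) = (Iio s).indicator (fun r => H r s) := by
    funext r; simp [indicator_apply, mem_Iio]
  rw [this, MeasureTheory.integral_indicator measurableSet_Iio,
    Measure.restrict_restrict measurableSet_Iio,
    show Iio s ∩ Ioc 0 t = Ioo 0 s by
      ext r; simp only [mem_inter_iff, mem_Iio, mem_Ioc, mem_Ioo]
      exact ⟨fun ⟨h1, h2, _⟩ => ⟨h2, h1⟩, fun ⟨h1, h2⟩ => ⟨h2, h1, le_trans h2.le hs.2⟩⟩,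
    ← integral_Ioc_eq_integral_Ioo]

lemma tri_int (hmeas : Measurable (uncurry H))
    (h1 : ∀ r ∈ Ioc 0 t, IntegrableOn (H r) (Ioc r t))
    (h2 : IntegrableOn (fun r => ∫ s in Ioc r t, |H r s|) (Ioc 0 t)) :
    Integrable (fun p : ℝ × ℝ => if p.1 < p.2 then H p.1 p.2 else 0)
      ((volume.restrict (Ioc 0 t)).prod (volume.restrict (Ioc 0 t))) := by
  have hGmeas : Measurable (fun p : ℝ × ℝ => if p.1 < p.2 then H p.1 p.2 else 0) :=
    Measurable.ite (measurableSet_lt measurable_fst measurable_snd) hmeas measurable_const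
  rw [integrable_prod_iff hGmeas.aestronglyMeasurable]
  constructor
  · filter_upwards [ae_restrict_mem measurableSet_Ioc] with r hr
    have : (fun s => if r < s then H r s else 0) = (Ioi r).indicator (H r) := by
      funext s; simp [indicator_apply, mem_Ioi]
    rw [this, integrable_indicator_iff measurableSet_Ioi, IntegrableOn,
      Measure.restrict_restrict measurableSet_Ioi,
      show Ioi r ∩ Ioc 0 t = Ioc r t by
        ext s; simp only [mem_inter_iff, mem_Ioi, mem_Ioc]
        exact ⟨fun ⟨a1, _, a3⟩ => ⟨a1, a3⟩, fun ⟨a1, a2⟩ => ⟨a1, lt_trans hr.1 a1, a2⟩⟩]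
    exact h1 r hr
  · apply h2.congr
    filter_upwards [ae_restrict_mem measurableSet_Ioc] with r hr
    have : (fun s => ‖if r < s then H r s else 0‖) = fun s => if r < s then |H r s| else 0 := by
      funext s; split <;> simp [Real.norm_eq_abs]
    rw [this]
    exact (inner_eq1 (H := fun r s => |H r s|) hr).symm

lemma tri_swap (hmeas : Measurable (uncurry H))
    (h1 : ∀ r ∈ Ioc 0 t, IntegrableOn (H r) (Ioc r t))
    (h2 : IntegrableOn (fun r => ∫ s in Ioc r t, |H r s|) (Ioc 0 t)) :
    ∫ s in Ioc 0 t, ∫ r in Ioc 0 s, H r s = ∫ r in Ioc 0 t, ∫ s in Ioc r t, H r s := by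
  have hG := tri_int hmeas h1 h2
  calc ∫ s in Ioc 0 t, ∫ r in Ioc 0 s, H r s
      = ∫ s in Ioc 0 t, ∫ r in Ioc 0 t, (if r < s then H r s else 0) :=
        (setIntegral_congr_fun measurableSet_Ioc (fun s hs => (inner_eq2 hs))).symm
    _ = ∫ r in Ioc 0 t, ∫ s in Ioc 0 t, (if r < s then H r s else 0) :=
        (integral_integral_swap hG).symm
    _ = ∫ r in Ioc 0 t, ∫ s in Ioc r t, H r s :=
        setIntegral_congr_fun measurableSet_Ioc (fun r hr => inner_eq1 hr)

lemma tri_left_int (hmeas : Measurable (uncurry H))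
    (h1 : ∀ r ∈ Ioc 0 t, IntegrableOn (H r) (Ioc r t))
    (h2 : IntegrableOn (fun r => ∫ s in Ioc r t, |H r s|) (Ioc 0 t)) :
    IntegrableOn (fun s => ∫ r in Ioc 0 s, H r s) (Ioc 0 t) := by
  have hG := (tri_int hmeas h1 h2).swap
  apply hG.integral_prod_left.congr
  filter_upwards [ae_restrict_mem measurableSet_Ioc] with s hs
  exact (inner_eq2 hs)

lemma abs_mul_c_int {g c : ℝ → ℝ} {A : Set ℝ} (hg : IntegrableOn g A)
    (hcm : Measurable c) (C : ℝ) (hbd : ∀ r ∈ A, |c r| ≤ C) (hA : MeasurableSet A) :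
    IntegrableOn (fun r => |g r| * c r) A := by
  have h := Integrable.bdd_mul (c := C) hg.norm hcm.aestronglyMeasurable.restrict ?_
  · exact h.congr (Filter.Eventually.of_forall fun r => mul_comm _ _)
  · filter_upwards [ae_restrict_mem hA] with r hr
    rw [Real.norm_eq_abs]; exact hbd r hr

lemma tri_package {τ : ℝ} {g : ℝ → ℝ} {K : ℝ → ℝ → ℝ} {c : ℝ → ℝ}
    (hgm : Measurable g)
    (hKm : Measurable (uncurry K))
    (hKnn : ∀ r ∈ Ioc 0 τ, ∀ s ∈ Ioc r τ, 0 ≤ K r s)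
    (hKint : ∀ r ∈ Ioc 0 τ, IntegrableOn (K r) (Ioc r τ))
    (hc : ∀ᵐ r ∂volume.restrict (Ioc 0 τ), ∫ s in Ioc r τ, K r s = c r)
    (hcint : IntegrableOn (fun r => |g r| * c r) (Ioc 0 τ)) :
    IntegrableOn (fun s => ∫ r in Ioc 0 s, g r * K r s) (Ioc 0 τ) ∧
    ∫ s in Ioc 0 τ, ∫ r in Ioc 0 s, g r * K r s = ∫ r in Ioc 0 τ, g r * c r := by
  have hmeas : Measurable (uncurry fun r s => g r * K r s) :=
    (hgm.comp measurable_fst).mul hKm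
  have h1 : ∀ r ∈ Ioc 0 τ, IntegrableOn (fun s => g r * K r s) (Ioc r τ) :=
    fun r hr => (hKint r hr).const_mul _
  have h2 : IntegrableOn (fun r => ∫ s in Ioc r τ, |g r * K r s|) (Ioc 0 τ) := by
    apply hcint.congr
    filter_upwards [hc, ae_restrict_mem measurableSet_Ioc] with r hcr hr
    have : ∀ s ∈ Ioc r τ, |g r| * K r s = |g r * K r s| := by
      intro s hs
      rw [abs_mul, abs_of_nonneg (hKnn r hr s hs)]
    rw [← setIntegral_congr_fun measurableSet_Ioc this, MeasureTheory.integral_const_mul, hcr]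
  refine ⟨tri_left_int hmeas h1 h2, ?_⟩
  rw [tri_swap hmeas h1 h2]
  apply MeasureTheory.integral_congr_ae
  filter_upwards [hc] with r hcr
  rw [MeasureTheory.integral_const_mul, hcr]

/-! ### Lebesgue differentiation -/

lemma ae_hasDerivAt_primitive (f : ℝ → ℝ) (hf : Integrable f) :
    ∀ᵐ s, HasDerivAt (fun τ => ∫ x in (0:ℝ)..τ, f x) (f s) s := by
  filter_upwards [IsUnifLocDoublingMeasure.ae_tendsto_average_norm_sub volume
    hf.locallyIntegrable 1] with s hs
  have hs' : Tendsto (fun y : ℝ => ⨍ x in closedBall s |y - s|, ‖f x - f s‖)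
      (nhdsWithin s {s}ᶜ) (nhds 0) := by
    apply hs (fun y : ℝ => s) (fun y : ℝ => |y - s|)
    · rw [tendsto_nhdsWithin_iff]
      constructor
      · have : Continuous (fun y : ℝ => |y - s|) := by continuity
        have h0 : |s - s| = 0 := by simp
        exact (h0 ▸ this.tendsto s).mono_left nhdsWithin_le_nhds
      · filter_upwards [self_mem_nhdsWithin] with y hy
        exact abs_pos.mpr (sub_ne_zero.mpr hy)
    · filter_upwards with y
      simp [mem_closedBall]
  rw [hasDerivAt_iff_tendsto_slope]
  have key : ∀ y : ℝ, y ≠ s →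
      ‖slope (fun τ => ∫ x in (0:ℝ)..τ, f x) s y - f s‖
        ≤ 2 * ⨍ x in closedBall s |y - s|, ‖f x - f s‖ := by
    intro y hy
    have hys : |y - s| > 0 := abs_pos.mpr (sub_ne_zero.mpr hy)
    have hFd : (∫ x in (0:ℝ)..y, f x) - ∫ x in (0:ℝ)..s, f x = ∫ x in s..y, f x :=
      integral_interval_sub_left hf.intervalIntegrable hf.intervalIntegrable
    have hslope : slope (fun τ => ∫ x in (0:ℝ)..τ, f x) s y - f s
        = (y - s)⁻¹ • ∫ x in s..y, (f x - f s) := by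
      rw [slope_def_field, div_sub' (sub_ne_zero.mpr hy)]
      rw [intervalIntegral.integral_sub hf.intervalIntegrable (intervalIntegrable_const),
        intervalIntegral.integral_const, hFd]
      simp [smul_eq_mul, div_eq_inv_mul, smul_eq_mul]
    rw [hslope]
    have hsub : Set.uIoc s y ⊆ closedBall s |y - s| := by
      intro x hx
      rw [mem_closedBall, Real.dist_eq]
      rcases le_total s y with h | h
      · rw [uIoc_of_le h] at hx
        rw [abs_of_nonneg (by linarith [hx.1.le, hx.2]), abs_of_nonneg (by linarith)]
        linarith [hx.2]
      · rw [uIoc_of_ge h] at hx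
        rw [abs_of_nonpos (by linarith [hx.1.le, hx.2]), abs_of_nonpos (by linarith)]
        linarith [hx.1]
    have hball_int : IntegrableOn (fun x => ‖f x - f s‖) (closedBall s |y - s|) :=
      ((hf.integrableOn.sub (integrableOn_const measure_closedBall_lt_top.ne)).norm)
    have hbd : ‖∫ x in s..y, (f x - f s)‖ ≤ ∫ x in closedBall s |y - s|, ‖f x - f s‖ := by
      refine le_trans norm_integral_le_integral_norm_uIoc ?_
      exact setIntegral_mono_set hball_int
        (Filter.Eventually.of_forall fun x => norm_nonneg _) (HasSubset.Subset.eventuallyLE hsub)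
    have havg : ∫ x in closedBall s |y - s|, ‖f x - f s‖
        = (2 * |y - s|) * ⨍ x in closedBall s |y - s|, ‖f x - f s‖ := by
      rw [setAverage_eq, smul_eq_mul, Real.volume_real_closedBall (by positivity)]
      rw [← mul_assoc, mul_inv_cancel₀ (by positivity), one_mul]
    rw [norm_smul, Real.norm_eq_abs, abs_inv, abs_sub_comm y s] at *
    calc |s - y|⁻¹ * ‖∫ x in s..y, (f x - f s)‖
        ≤ |s - y|⁻¹ * ((2 * |s - y|) * ⨍ x in closedBall s |s - y|, ‖f x - f s‖) := by
          rw [abs_sub_comm s y] at *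
          exact mul_le_mul_of_nonneg_left (le_trans hbd (le_of_eq havg)) (by positivity)
      _ = 2 * ⨍ x in closedBall s |s - y|, ‖f x - f s‖ := by
          field_simp
  have h2 : Tendsto (fun y : ℝ => 2 * ⨍ x in closedBall s |y - s|, ‖f x - f s‖)
      (nhdsWithin s {s}ᶜ) (nhds 0) := by
    simpa using hs'.const_mul 2
  have h3 : Tendsto (fun y => slope (fun τ => ∫ x in (0:ℝ)..τ, f x) s y - f s)
      (nhdsWithin s {s}ᶜ) (nhds 0) := by
    apply squeeze_zero_norm' _ h2
    filter_upwards [self_mem_nhdsWithin] with y hy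
    exact key y hy
  have := h3.add_const (f s)
  simpa using this

end CaputoAux

open MeasureTheory Set CaputoAux intervalIntegral Function Filter in
/-- For `0 < α < 1`, `T > 0` and `η` absolutely continuous on `[0,T]`,
`∂_t^α ∫_0^t η(s)(t−s)^{α−1} ds = Γ(α) η(t)` for every `0 < t ≤ T`. -/
theorem caputo_of_abel_integral (α T : ℝ) (hα0 : 0 < α) (hα1 : α < 1) (hT : 0 < T)
    (η : ℝ → ℝ) (hη : AbsContOn η 0 T) :
    ∀ t : ℝ, 0 < t → t ≤ T →
      caputoDeriv α (fun τ => ∫ s in (0:ℝ)..τ, η s * (τ - s) ^ (α - 1)) t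
        = Real.Gamma α * η t := by
  intro t ht0 htT
  obtain ⟨f', hf'int, hf'eq⟩ := hη
  set g : ℝ → ℝ := (hf'int.aestronglyMeasurable).mk f' with hgdef
  have hgsm := hf'int.aestronglyMeasurable.stronglyMeasurable_mk
  have hfg : f' =ᵐ[volume.restrict (Icc 0 T)] g := hf'int.aestronglyMeasurable.ae_eq_mk
  have hgm : Measurable g := hgsm.measurable
  have hgint : IntegrableOn g (Icc 0 T) := hf'int.congr hfg
  have hgae : ∀ᵐ x ∂volume, x ∈ Icc (0:ℝ) T → f' x = g x :=
    (ae_restrict_iff' measurableSet_Icc).mp hfg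
  have hηg : ∀ x ∈ Icc (0:ℝ) T, η x = η 0 + ∫ r in (0:ℝ)..x, g r := by
    intro x hx
    rw [hf'eq x hx]
    congr 1
    apply intervalIntegral.integral_congr_ae
    filter_upwards [hgae] with y hy hmem
    rw [uIoc_of_le hx.1] at hmem
    exact hy ⟨hmem.1.le, hmem.2.trans hx.2⟩
  have hgint' : ∀ τ, τ ≤ T → IntegrableOn g (Ioc 0 τ) := fun τ hτ =>
    hgint.mono_set (fun x hx => ⟨hx.1.le, hx.2.trans hτ⟩)
  have htT' : t ∈ Ioc (0:ℝ) T := ⟨ht0, htT⟩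
  have hne : ∀ᵐ s : ℝ ∂volume, s ≠ t := by
    rw [MeasureTheory.ae_iff]
    have h : {s : ℝ | ¬ s ≠ t} = {t} := by ext s; simp
    rw [h]; exact measure_singleton t
  have pack1 : ∀ τ ∈ Ioc (0:ℝ) T,
      IntegrableOn (fun s => ∫ r in Ioc 0 s, g r * (τ-s) ^ (α-1)) (Ioc 0 τ) ∧
      ∫ s in Ioc 0 τ, ∫ r in Ioc 0 s, g r * (τ-s) ^ (α-1)
        = ∫ r in Ioc 0 τ, g r * ((τ-r) ^ α / α) := by
    intro τ hτ
    apply tri_package hgm (K := fun r s => (τ-s) ^ (α-1)) (c := fun r => (τ-r) ^ α / α)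
    · show Measurable (fun p : ℝ × ℝ => (τ - p.2) ^ (α-1)); fun_prop
    · intro r hr s hs; exact Real.rpow_nonneg (by linarith [hs.2]) _
    · intro r hr; exact int_rev (by linarith)
    · filter_upwards [ae_restrict_mem measurableSet_Ioc] with r hr
      exact int_pow_right hα0 hr.2
    · apply abs_mul_c_int (hgint' τ hτ.2) (by fun_prop) (τ ^ α / α) ?_ measurableSet_Ioc
      intro r hr
      rw [abs_div, abs_of_nonneg (Real.rpow_nonneg (by linarith [hr.2]) α), abs_of_pos hα0]
      exact (div_le_div_iff_of_pos_right hα0).mpr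
        (Real.rpow_le_rpow (by linarith [hr.2]) (by linarith [hr.1]) hα0.le)
  have pack2 : ∀ τ ∈ Ioc (0:ℝ) T,
      IntegrableOn (fun s => ∫ r in Ioc 0 s, g r * (s-r) ^ (α-1)) (Ioc 0 τ) ∧
      ∫ s in Ioc 0 τ, ∫ r in Ioc 0 s, g r * (s-r) ^ (α-1)
        = ∫ r in Ioc 0 τ, g r * ((τ-r) ^ α / α) := by
    intro τ hτ
    apply tri_package hgm (K := fun r s => (s-r) ^ (α-1)) (c := fun r => (τ-r) ^ α / α)
    · show Measurable (fun p : ℝ × ℝ => (p.2 - p.1) ^ (α-1)); fun_prop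
    · intro r hr s hs; exact Real.rpow_nonneg (by linarith [hs.1]) _
    · intro r hr; exact int_fwd (by linarith)
    · filter_upwards [ae_restrict_mem measurableSet_Ioc] with r hr
      exact int_pow_left hα0 hr.2
    · apply abs_mul_c_int (hgint' τ hτ.2) (by fun_prop) (τ ^ α / α) ?_ measurableSet_Ioc
      intro r hr
      rw [abs_div, abs_of_nonneg (Real.rpow_nonneg (by linarith [hr.2]) α), abs_of_pos hα0]
      exact (div_le_div_iff_of_pos_right hα0).mpr
        (Real.rpow_le_rpow (by linarith [hr.2]) (by linarith [hr.1]) hα0.le)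
  have pack3 :
      IntegrableOn (fun s => ∫ r in Ioc 0 s, g r * ((s-r) ^ (α-1) * (t-s) ^ (-α))) (Ioc 0 t) ∧
      ∫ s in Ioc 0 t, ∫ r in Ioc 0 s, g r * ((s-r) ^ (α-1) * (t-s) ^ (-α))
        = ∫ r in Ioc 0 t, g r * (Real.Gamma α * Real.Gamma (1-α)) := by
    apply tri_package hgm (K := fun r s => (s-r) ^ (α-1) * (t-s) ^ (-α))
      (c := fun _ => Real.Gamma α * Real.Gamma (1-α))
    · show Measurable (fun p : ℝ × ℝ => (p.2 - p.1) ^ (α-1) * (t - p.2) ^ (-α)); fun_prop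
    · intro r hr s hs
      exact mul_nonneg (Real.rpow_nonneg (by linarith [hs.1]) _)
        (Real.rpow_nonneg (by linarith [hs.2]) _)
    · intro r hr; exact kernel_int_le hα0 hα1 hr.2
    · filter_upwards [ae_restrict_mem measurableSet_Ioc, ae_restrict_of_ae hne] with r hr hrne
      rw [← intervalIntegral.integral_of_le hr.2]
      exact beta_shift hα0 hα1 (lt_of_le_of_ne hr.2 hrne)
    · exact ((hgint' t htT).norm.mul_const (Real.Gamma α * Real.Gamma (1-α))).congr
        (Eventually.of_forall fun r => by simp [Real.norm_eq_abs])
  have hu_eq : ∀ τ ∈ Ioc (0:ℝ) T,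
      (∫ s in (0:ℝ)..τ, η s * (τ-s) ^ (α-1))
        = η 0 * (τ ^ α / α) + ∫ r in Ioc 0 τ, g r * ((τ-r) ^ α / α) := by
    intro τ hτ
    rw [intervalIntegral.integral_of_le hτ.1.le]
    have e1 : ∀ s ∈ Ioc (0:ℝ) τ, η s * (τ-s) ^ (α-1)
        = η 0 * (τ-s) ^ (α-1) + (∫ r in Ioc 0 s, g r) * (τ-s) ^ (α-1) := by
      intro s hs
      rw [hηg s ⟨hs.1.le, hs.2.trans hτ.2⟩, intervalIntegral.integral_of_le hs.1.le]
      ring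
    rw [setIntegral_congr_fun measurableSet_Ioc e1]
    have i1 : IntegrableOn (fun s => η 0 * (τ-s) ^ (α-1)) (Ioc 0 τ) :=
      (int_rev (by linarith)).const_mul _
    have i2 : IntegrableOn (fun s => (∫ r in Ioc 0 s, g r) * (τ-s) ^ (α-1)) (Ioc 0 τ) :=
      (pack1 τ hτ).1.congr (Eventually.of_forall fun s => MeasureTheory.integral_mul_const _ _)
    rw [MeasureTheory.integral_add i1 i2]
    congr 1
    · rw [MeasureTheory.integral_const_mul]
      congr 1
      have := int_pow_right (r := (0:ℝ)) (τ := τ) hα0 hτ.1.le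
      simpa using this
    · rw [show (fun s => (∫ r in Ioc 0 s, g r) * (τ-s) ^ (α-1))
          = fun s => ∫ r in Ioc 0 s, g r * (τ-s) ^ (α-1) from
          funext fun s => (MeasureTheory.integral_mul_const _ _).symm]
      exact (pack1 τ hτ).2
  set φ : ℝ → ℝ := fun s => η 0 * s ^ (α-1) + ∫ r in Ioc 0 s, g r * (s-r) ^ (α-1) with hφdef
  have hF_eq : ∀ τ ∈ Ioc (0:ℝ) T,
      (∫ s in Ioc 0 τ, φ s)
        = η 0 * (τ ^ α / α) + ∫ r in Ioc 0 τ, g r * ((τ-r) ^ α / α) := by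
    intro τ hτ
    have i1 : IntegrableOn (fun s => η 0 * s ^ (α-1)) (Ioc 0 τ) := by
      have := (int_fwd (r := (0:ℝ)) (t := τ) (β := α-1) (by linarith)).const_mul (η 0)
      simpa [IntegrableOn] using this
    have i2 := (pack2 τ hτ).1
    simp only [hφdef]
    rw [MeasureTheory.integral_add i1 i2]
    congr 1
    · rw [MeasureTheory.integral_const_mul]
      congr 1
      have := int_pow_left (r := (0:ℝ)) (τ := τ) hα0 hτ.1.le
      simpa using this
    · exact (pack2 τ hτ).2
  have hφint : IntegrableOn φ (Ioc 0 t) := by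
    have i1 : IntegrableOn (fun s => η 0 * s ^ (α-1)) (Ioc 0 t) := by
      have := (int_fwd (r := (0:ℝ)) (t := t) (β := α-1) (by linarith)).const_mul (η 0)
      simpa [IntegrableOn] using this
    exact i1.add (pack2 t htT').1
  have hfint : Integrable ((Ioo (0:ℝ) t).indicator φ) := by
    rw [integrable_indicator_iff measurableSet_Ioo]
    exact hφint.mono_set Ioo_subset_Ioc_self
  have hEqOn : ∀ y ∈ Ioo (0:ℝ) t,
      (∫ s in (0:ℝ)..y, η s * (y-s) ^ (α-1)) = ∫ x in (0:ℝ)..y, (Ioo (0:ℝ) t).indicator φ x := by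
    intro y hy
    have hyT : y ∈ Ioc (0:ℝ) T := ⟨hy.1, hy.2.le.trans htT⟩
    rw [hu_eq y hyT, ← hF_eq y hyT, intervalIntegral.integral_of_le hy.1.le]
    apply setIntegral_congr_fun measurableSet_Ioc
    intro s hs
    exact (indicator_of_mem (show s ∈ Ioo (0:ℝ) t from ⟨hs.1, lt_of_le_of_lt hs.2 hy.2⟩) φ).symm
  have hderiv : ∀ᵐ s ∂volume, s ∈ Ioo (0:ℝ) t →
      deriv (fun τ => ∫ s in (0:ℝ)..τ, η s * (τ-s) ^ (α-1)) s = φ s := by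
    filter_upwards [ae_hasDerivAt_primitive _ hfint] with s hF hs
    have hmem : Ioo (0:ℝ) t ∈ nhds s := isOpen_Ioo.mem_nhds hs
    have heq : (fun τ => ∫ s in (0:ℝ)..τ, η s * (τ-s) ^ (α-1))
        =ᶠ[nhds s] (fun τ => ∫ x in (0:ℝ)..τ, (Ioo (0:ℝ) t).indicator φ x) :=
      eventually_of_mem hmem hEqOn
    rw [heq.deriv_eq, hF.deriv]
    exact indicator_of_mem hs φ
  unfold caputoDeriv
  have step1 : (∫ s in (0:ℝ)..t,
        deriv (fun τ => ∫ s in (0:ℝ)..τ, η s * (τ-s) ^ (α-1)) s * (t-s) ^ (-α))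
      = ∫ s in Ioc 0 t, φ s * (t-s) ^ (-α) := by
    rw [intervalIntegral.integral_of_le ht0.le]
    apply setIntegral_congr_ae measurableSet_Ioc
    filter_upwards [hderiv, hne] with s h1 h2 hmem
    rw [h1 ⟨hmem.1, lt_of_le_of_ne hmem.2 h2⟩]
  rw [step1]
  have split : ∀ s ∈ Ioc (0:ℝ) t, φ s * (t-s) ^ (-α)
      = η 0 * (s ^ (α-1) * (t-s) ^ (-α))
        + ∫ r in Ioc 0 s, g r * ((s-r) ^ (α-1) * (t-s) ^ (-α)) := by
    intro s hs
    have e : (∫ r in Ioc 0 s, g r * ((s-r) ^ (α-1) * (t-s) ^ (-α)))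
        = (∫ r in Ioc 0 s, g r * (s-r) ^ (α-1)) * (t-s) ^ (-α) := by
      rw [← MeasureTheory.integral_mul_const]
      apply MeasureTheory.integral_congr_ae
      exact Eventually.of_forall fun r => (mul_assoc _ _ _).symm
    rw [e]
    simp only [hφdef]
    ring
  rw [setIntegral_congr_fun measurableSet_Ioc split]
  have iA : IntegrableOn (fun s => η 0 * (s ^ (α-1) * (t-s) ^ (-α))) (Ioc 0 t) := by
    have := (kernel_int (r := (0:ℝ)) hα0 hα1 ht0).const_mul (η 0)
    simpa [IntegrableOn] using this
  rw [MeasureTheory.integral_add iA pack3.1]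
  have vA : (∫ s in Ioc 0 t, η 0 * (s ^ (α-1) * (t-s) ^ (-α)))
      = η 0 * (Real.Gamma α * Real.Gamma (1-α)) := by
    rw [MeasureTheory.integral_const_mul]
    congr 1
    rw [← intervalIntegral.integral_of_le ht0.le]
    have := beta_shift (r := (0:ℝ)) (t := t) hα0 hα1 ht0
    simpa using this
  have vB : (∫ s in Ioc 0 t, ∫ r in Ioc 0 s, g r * ((s-r) ^ (α-1) * (t-s) ^ (-α)))
      = (∫ r in Ioc 0 t, g r) * (Real.Gamma α * Real.Gamma (1-α)) := by
    rw [pack3.2, MeasureTheory.integral_mul_const]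
  rw [vA, vB]
  have hηt : η t = η 0 + ∫ r in Ioc 0 t, g r := by
    rw [hηg t ⟨ht0.le, htT⟩, intervalIntegral.integral_of_le ht0.le]
  have hΓ : Real.Gamma (1-α) ≠ 0 := ne_of_gt (Real.Gamma_pos_of_pos (by linarith))
  rw [hηt]
  field_simp
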